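/- For every real number c > 0, the integral ∫₀¹ y·tanh(c·y) dy equals 1/2 − π²/(24c²) + ln(1 + e^{−2c})/c − Li₂(−e^{−2c})/(2c²), where Li₂ denotes the dilogarithm (polylogarithm of order 2). -/

import Mathlib

open Real

/-- The dilogarithm `Li₂(x) = Σ_{n≥1} xⁿ/n²`. -/
noncomputable def Li2 (x : ℝ) : ℝ := ∑' n : ℕ, x ^ (n + 1) / ((n : ℝ) + 1) ^ 2

lemma hasSum_succ_sq : HasSum (fun n : ℕ => 1 / ((n : ℝ) + 1) ^ 2) (π ^ 2 / 6) := by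
  have h2 : HasSum (fun n : ℕ => (1:ℝ) / ((n + 1 : ℕ):ℝ) ^ 2) (π ^ 2 / 6) := by
    rw [hasSum_nat_add_iff (f := fun n : ℕ => (1:ℝ) / (n:ℝ) ^ 2) 1]
    simpa using hasSum_zeta_two
  exact h2.congr_fun (fun n => by norm_num)

lemma hasSum_alt : HasSum (fun n : ℕ => (-1 : ℝ) ^ (n + 1) / ((n : ℝ) + 1) ^ 2) (-(π ^ 2 / 12)) := by
  set f : ℕ → ℝ := fun n => (-1 : ℝ) ^ (n + 1) / ((n : ℝ) + 1) ^ 2 with hf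
  have hg := hasSum_succ_sq
  have h4 : HasSum (fun k : ℕ => (1/4 : ℝ) * (1 / ((k:ℝ) + 1) ^ 2)) (π ^ 2 / 24) := by
    have h4 := hg.mul_left (1/4)
    have he : (1/4 : ℝ) * (π ^ 2 / 6) = π ^ 2 / 24 := by ring
    rwa [he] at h4
  have hodd : HasSum (fun k : ℕ => f (2 * k + 1)) (π ^ 2 / 24) := by
    refine h4.congr_fun fun k => ?_
    simp only [hf]
    have h1 : ((-1 : ℝ)) ^ (2 * k + 1 + 1) = 1 := by
      rw [pow_succ, pow_succ]; simp [pow_mul]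
    rw [h1]
    have hk : ((k:ℝ)+1) ≠ 0 := by positivity
    push_cast
    field_simp
    ring
  have hev_summ : Summable (fun k : ℕ => 1 / (((2 * k : ℕ) : ℝ) + 1) ^ 2) := by
    have hinj : Function.Injective (fun k : ℕ => 2 * k) := fun a b h => by simp at h; omega
    exact hg.summable.comp_injective hinj
  have hev := hev_summ.hasSum
  have hgodd : HasSum (fun k : ℕ => 1 / (((2 * k + 1 : ℕ) : ℝ) + 1) ^ 2) (π ^ 2 / 24) := by
    refine h4.congr_fun fun k => ?_
    have hk : ((k:ℝ)+1) ≠ 0 := by positivity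
    push_cast
    field_simp
    ring
  have htot := HasSum.even_add_odd (f := fun n : ℕ => 1 / ((n:ℝ)+1)^2) hev hgodd
  have hval : (∑' k : ℕ, 1 / (((2 * k : ℕ) : ℝ) + 1) ^ 2) = π ^ 2 / 8 := by
    have := htot.unique hg
    linarith
  rw [hval] at hev
  have hfev : HasSum (fun k : ℕ => f (2 * k)) (-(π ^ 2 / 8)) := by
    refine hev.neg.congr_fun fun k => ?_
    simp only [hf]
    have h1 : ((-1 : ℝ)) ^ (2 * k + 1) = -1 := by
      rw [pow_succ]; simp [pow_mul]
    rw [h1]; push_cast; ring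
  have hfin := HasSum.even_add_odd (f := f) hfev hodd
  convert hfin using 1
  ring

lemma Li2_neg_one : Li2 (-1) = -(π ^ 2 / 12) := by
  have h := hasSum_alt
  have : Li2 (-1) = ∑' n : ℕ, (-1 : ℝ) ^ (n + 1) / ((n : ℝ) + 1) ^ 2 := rfl
  rw [this, h.tsum_eq]

lemma Li2_hasDerivAt {x : ℝ} (hx : |x| < 1) :
    HasDerivAt Li2 (∑' n : ℕ, x ^ n / ((n : ℝ) + 1)) x := by
  set r : ℝ := (|x| + 1) / 2 with hr
  have hr1 : r < 1 := by rw [hr]; linarith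
  have hrpos : 0 < r := by rw [hr]; positivity
  have hxr : |x| < r := by rw [hr]; linarith
  have hmem0 : (0:ℝ) ∈ Metric.ball (0:ℝ) r := by simpa [Real.dist_eq] using hrpos
  have hmemx : x ∈ Metric.ball (0:ℝ) r := by simpa [Real.dist_eq] using hxr
  have hsum0 : Summable (fun n : ℕ => (0:ℝ) ^ (n + 1) / ((n : ℝ) + 1) ^ 2) := by
    refine summable_zero.congr fun n => ?_
    simp
  have h := hasDerivAt_tsum_of_isPreconnected
    (u := fun n : ℕ => r ^ n)
    (g := fun (n : ℕ) (z : ℝ) => z ^ (n + 1) / ((n : ℝ) + 1) ^ 2)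
    (g' := fun (n : ℕ) (z : ℝ) => z ^ n / ((n : ℝ) + 1))
    (t := Metric.ball (0:ℝ) r) (y₀ := 0) (y := x)
    (summable_geometric_of_lt_one hrpos.le hr1) Metric.isOpen_ball
    (convex_ball (0:ℝ) r).isPreconnected
    (fun n y _ => by
      have hd := (hasDerivAt_pow (n + 1) y).div_const (((n : ℝ) + 1) ^ 2)
      have hne : ((n : ℝ) + 1) ≠ 0 := by positivity
      convert hd using 1
      · rfl
      push_cast
      field_simp)
    (fun n y hy => by
      have hyr : |y| < r := by simpa [Real.dist_eq] using hy
      have h1 : ‖y ^ n / ((n : ℝ) + 1)‖ ≤ ‖y ^ n‖ := by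
        rw [norm_div]
        apply div_le_self (norm_nonneg _)
        simp only [Real.norm_eq_abs]
        rw [abs_of_nonneg (by positivity)]
        linarith [Nat.cast_nonneg (α := ℝ) n]
      refine h1.trans ?_
      rw [norm_pow, Real.norm_eq_abs]
      exact pow_le_pow_left₀ (abs_nonneg _) hyr.le n)
    hmem0 hsum0 hmemx
  exact h

lemma tsum_deriv_eq {x : ℝ} (hx : |x| < 1) (hx0 : x ≠ 0) :
    (∑' n : ℕ, x ^ n / ((n : ℝ) + 1)) = -Real.log (1 - x) / x := by
  have h := hasSum_pow_div_log_of_abs_lt_one hx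
  have h2 : HasSum (fun n : ℕ => x ^ n / ((n : ℝ) + 1)) (-Real.log (1 - x) / x) := by
    refine (h.div_const x).congr_fun fun n => ?_
    rw [pow_succ']
    field_simp
  exact h2.tsum_eq

lemma Li2_bound (n : ℕ) (x : ℝ) (hx : |x| ≤ 1) :
    ‖x ^ (n + 1) / ((n : ℝ) + 1) ^ 2‖ ≤ 1 / ((n : ℝ) + 1) ^ 2 := by
  have hden : ‖(((n : ℝ) + 1) ^ 2)‖ = ((n : ℝ) + 1) ^ 2 := by
    rw [Real.norm_eq_abs, abs_of_nonneg (by positivity)]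
  rw [norm_div, hden, norm_pow, Real.norm_eq_abs]
  gcongr
  exact pow_le_one₀ (abs_nonneg _) hx

lemma Li2_continuousOn : ContinuousOn Li2 (Set.Icc (-1 : ℝ) 1) := by
  rw [continuousOn_iff_continuous_restrict]
  have heq : (Set.Icc (-1:ℝ) 1).restrict Li2
      = fun x : Set.Icc (-1:ℝ) 1 => ∑' n : ℕ, (x : ℝ) ^ (n + 1) / ((n : ℝ) + 1) ^ 2 := rfl
  rw [show Set.domRestrict _ Li2 = _ from heq]
  apply continuous_tsum (u := fun n : ℕ => 1 / ((n : ℝ) + 1) ^ 2)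
  · intro i
    fun_prop
  · exact hasSum_succ_sq.summable
  · intro n x
    exact Li2_bound n x (abs_le.mpr ⟨x.2.1, x.2.2⟩)

theorem integral_mul_tanh_eq (c : ℝ) (hc : 0 < c) :
    ∫ y in (0:ℝ)..1, y * Real.tanh (c * y) =
      1 / 2 - π ^ 2 / (24 * c ^ 2) + Real.log (1 + Real.exp (-2 * c)) / c
        - Li2 (-Real.exp (-2 * c)) / (2 * c ^ 2) := by
  have hc' : c ≠ 0 := hc.ne'
  set F : ℝ → ℝ := fun y =>
    y ^ 2 / 2 + y * Real.log (1 + Real.exp (-2 * c * y)) / c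
      - Li2 (-Real.exp (-2 * c * y)) / (2 * c ^ 2) with hF
  have hpos : ∀ y : ℝ, (0:ℝ) < 1 + Real.exp (-2 * c * y) := fun y => by positivity
  -- continuity of F on [0,1]
  have hcont : ContinuousOn F (Set.Icc 0 1) := by
    have hinner : Continuous (fun y : ℝ => -Real.exp (-2 * c * y)) := by fun_prop
    have hmaps : ∀ y ∈ Set.Icc (0:ℝ) 1, -Real.exp (-2 * c * y) ∈ Set.Icc (-1:ℝ) 1 := by
      intro y hy
      have hy0 : 0 ≤ y := hy.1
      have hle : Real.exp (-2 * c * y) ≤ 1 := by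
        rw [Real.exp_le_one_iff]
        nlinarith
      have hgt : 0 < Real.exp (-2 * c * y) := Real.exp_pos _
      constructor <;> [linarith; linarith]
    have hLi : ContinuousOn (fun y : ℝ => Li2 (-Real.exp (-2 * c * y))) (Set.Icc 0 1) :=
      Li2_continuousOn.comp hinner.continuousOn hmaps
    apply ContinuousOn.sub
    · apply ContinuousOn.add
      · fun_prop
      · apply ContinuousOn.div_const
        apply ContinuousOn.mul continuousOn_id
        apply ContinuousOn.log (by fun_prop)
        intro y _; exact (hpos y).ne'
    · exact hLi.div_const _
  -- derivative on (0,1)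
  have hderiv : ∀ y ∈ Set.Ioo (0:ℝ) 1, HasDerivAt F (y * Real.tanh (c * y)) y := by
    intro y hy
    have hy0 : 0 < y := hy.1
    set e : ℝ := Real.exp (-2 * c * y) with he
    have hepos : 0 < e := Real.exp_pos _
    have helt : e < 1 := by
      rw [he, Real.exp_lt_one_iff]
      nlinarith
    have h1pe : (0:ℝ) < 1 + e := by linarith
    -- derivative pieces
    have hinner : HasDerivAt (fun y : ℝ => -2 * c * y) (-2 * c) y := by
      simpa using (hasDerivAt_id y).const_mul (-2 * c)
    have hexp : HasDerivAt (fun y : ℝ => Real.exp (-2 * c * y)) (e * (-2 * c)) y :=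
      hinner.exp
    have hsq : HasDerivAt (fun y : ℝ => y ^ 2 / 2) y y := by
      simpa using (hasDerivAt_pow 2 y).div_const 2
    have hlog : HasDerivAt (fun y : ℝ => Real.log (1 + Real.exp (-2 * c * y)))
        ((e * (-2 * c)) / (1 + e)) y := by
      have h := ((hasDerivAt_const y (1:ℝ)).add hexp).log (hpos y).ne'
      simp only [zero_add, ← he] at h
      exact h
    have hmul : HasDerivAt (fun y : ℝ => y * Real.log (1 + Real.exp (-2 * c * y)) / c)
        ((Real.log (1 + e) + y * ((e * (-2 * c)) / (1 + e))) / c) y := by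
      have h := ((hasDerivAt_id y).mul hlog).div_const c
      simp only [one_mul, ← he, id_eq] at h
      exact h
    have hxabs : |(-e : ℝ)| < 1 := by rw [abs_neg, abs_of_pos hepos]; exact helt
    have hLi2 := Li2_hasDerivAt hxabs
    rw [tsum_deriv_eq hxabs (by linarith : (-e:ℝ) ≠ 0)] at hLi2
    have hinner2 : HasDerivAt (fun y : ℝ => -Real.exp (-2 * c * y)) (-(e * (-2 * c))) y :=
      hexp.neg
    have hcomp : HasDerivAt (fun y : ℝ => Li2 (-Real.exp (-2 * c * y)))
        ((-Real.log (1 - -e) / -e) * (-(e * (-2 * c)))) y := by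
      exact hLi2.comp y hinner2
    have hLiDiv := hcomp.div_const (2 * c ^ 2)
    have htotal := (hsq.add hmul).sub hLiDiv
    convert htotal using 1
    · rfl
    · rfl
    · rfl
    -- algebraic identity
    have hE : Real.exp (c * y) > 0 := Real.exp_pos _
    have heE : e = (Real.exp (c * y))⁻¹ ^ 2 := by
      rw [he, ← Real.exp_neg, ← Real.exp_nat_mul]
      norm_num
      ring_nf
    rw [Real.tanh_eq_sinh_div_cosh, Real.sinh_eq, Real.cosh_eq, Real.exp_neg]
    rw [sub_neg_eq_add]
    rw [heE]
    have hEne : Real.exp (c * y) ≠ 0 := hE.ne'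
    have h1pe' : (1:ℝ) + (Real.exp (c * y))⁻¹ ^ 2 ≠ 0 := by
      rw [← heE]; exact h1pe.ne'
    field_simp
    ring
  -- integrability
  have hint : IntervalIntegrable (fun y => y * Real.tanh (c * y)) MeasureTheory.volume 0 1 := by
    have ht : Continuous fun y : ℝ => Real.tanh (c * y) := by
      have heq : (fun y : ℝ => Real.tanh (c * y))
          = fun y => Real.sinh (c * y) / Real.cosh (c * y) :=
        funext fun y => Real.tanh_eq_sinh_div_cosh _
      rw [heq]
      exact (Real.continuous_sinh.comp (by fun_prop)).div
        (Real.continuous_cosh.comp (by fun_prop)) (fun y => (Real.cosh_pos _).ne')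
    exact (continuous_id.mul ht).intervalIntegrable _ _
  have key := intervalIntegral.integral_eq_sub_of_hasDeriv_right_of_le
    (by norm_num : (0:ℝ) ≤ 1) hcont
    (fun y hy => (hderiv y hy).hasDerivWithinAt) hint
  rw [key, hF]
  simp only []
  rw [show (-2 * c * (1:ℝ)) = -2 * c by ring, show (-2 * c * (0:ℝ)) = 0 by ring,
    Real.exp_zero, Li2_neg_one]
  field_simp
  ring
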